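/- Let ω ∈ [1/2, 2] and set m_ω := (1−2^{−ω})/(e·ω) and M_ω := 2/((1−1/e)²·ω). Then for every ξ ≥ 0, m_ω·(1+ξ)^{ω−1}·e^{−ξ} ≤ ∫_ξ^∞ u^{ω−1}·e^{−u} du ≤ M_ω·(1+ξ)^{ω−1}·e^{−ξ}. -/

import Mathlib

open Real MeasureTheory Set Filter Topology

lemma aux_rpow_add_le {x y p : ℝ} (hx : 0 ≤ x) (hy : 0 ≤ y) (hp : 0 ≤ p) (hp1 : p ≤ 1) :
    (x + y) ^ p ≤ x ^ p + y ^ p := by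
  have h := NNReal.rpow_add_le_add_rpow ⟨x, hx⟩ ⟨y, hy⟩ hp hp1
  rw [← NNReal.coe_le_coe] at h
  push_cast [NNReal.coe_rpow] at h
  exact h

lemma aux_exp_facts : (1 - 1 / Real.exp 1) ^ 2 ≤ 1 / 2 ∧ 1 / Real.exp 1 ≤ 1 / 2 ∧
    0 < 1 - 1 / Real.exp 1 := by
  have he1 : Real.exp 1 < 2.7182818286 := Real.exp_one_lt_d9
  have he2 : 2.7182818283 < Real.exp 1 := Real.exp_one_gt_d9
  have hepos : (0 : ℝ) < Real.exp 1 := Real.exp_pos 1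
  have hEinv : Real.exp 1 * (1 / Real.exp 1) = 1 := mul_one_div_cancel (ne_of_gt hepos)
  have hxpos : 0 < 1 / Real.exp 1 := by positivity
  have hxlt : 1 / Real.exp 1 < 0.368 := by nlinarith
  have hxgt : 0.367 < 1 / Real.exp 1 := by nlinarith
  refine ⟨by nlinarith, by nlinarith, by nlinarith⟩

set_option maxHeartbeats 1600000 in
theorem upper_incomplete_gamma_bounds (ω : ℝ) (hω : ω ∈ Set.Icc (1/2 : ℝ) 2)
    (ξ : ℝ) (hξ : 0 ≤ ξ) :
    (1 - 2 ^ (-ω)) / (Real.exp 1 * ω) * (1 + ξ) ^ (ω - 1) * Real.exp (-ξ) ≤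
      ∫ u in Set.Ioi ξ, u ^ (ω - 1) * Real.exp (-u) ∧
    (∫ u in Set.Ioi ξ, u ^ (ω - 1) * Real.exp (-u)) ≤
      2 / ((1 - 1 / Real.exp 1) ^ 2 * ω) * (1 + ξ) ^ (ω - 1) * Real.exp (-ξ) := by
  obtain ⟨hω1, hω2⟩ := hω
  have hω0 : (0 : ℝ) < ω := by linarith
  have h1ξ : (0 : ℝ) < 1 + ξ := by linarith
  have hP : 0 < (1 + ξ) ^ (ω - 1) := Real.rpow_pos_of_pos h1ξ _
  have hX : 0 < Real.exp (-ξ) := Real.exp_pos _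
  have hepos : (0 : ℝ) < Real.exp 1 := Real.exp_pos 1
  obtain ⟨hc1, hc2, hc3⟩ := aux_exp_facts
  -- m_ω ≤ 1 / e
  have h2ω : 1 - (2 : ℝ) ^ (-ω) ≤ ω := by
    have hlog2 : Real.log 2 ≤ 1 := by
      have := Real.log_two_lt_d9; linarith
    have h2 : (2 : ℝ) ^ (-ω) = Real.exp (Real.log 2 * (-ω)) := Real.rpow_def_of_pos two_pos _
    have h3 := Real.add_one_le_exp (Real.log 2 * (-ω))
    have h4 : Real.log 2 * ω ≤ ω := by
      nlinarith [Real.log_pos (by norm_num : (1:ℝ) < 2)]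
    rw [h2]; nlinarith
  have hmle : (1 - 2 ^ (-ω)) / (Real.exp 1 * ω) ≤ 1 / Real.exp 1 := by
    rw [div_le_div_iff₀ (by positivity) hepos]
    nlinarith
  -- integrability of the main function
  have hint : IntegrableOn (fun u : ℝ => u ^ (ω - 1) * Real.exp (-u)) (Set.Ioi ξ) := by
    have h := (Real.GammaIntegral_convergent hω0).mono_set (Set.Ioi_subset_Ioi hξ)
    exact h.congr_fun (fun x _ => mul_comm _ _) measurableSet_Ioi
  have hf_nonneg : 0 ≤ᵐ[volume.restrict (Set.Ioi ξ)]
      fun u : ℝ => u ^ (ω - 1) * Real.exp (-u) := by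
    filter_upwards [ae_restrict_mem measurableSet_Ioi] with x hx
    exact mul_nonneg (Real.rpow_nonneg (by simp only [mem_Ioi] at hx; linarith) _)
      (Real.exp_pos _).le
  -- exp integral over Ioc
  have hIocExp : ∫ u in Set.Ioc ξ (ξ + 1), Real.exp (-u)
      = Real.exp (-ξ) - Real.exp (-(ξ + 1)) := by
    rw [← intervalIntegral.integral_of_le (by linarith : ξ ≤ ξ + 1),
      intervalIntegral.integral_comp_neg (fun x => Real.exp x), integral_exp]
  rcases le_total 1 ω with hcase | hcase
  · -- ω ≥ 1
    constructor
    · -- lower bound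
      have hsub : Set.Ioi (ξ + 1) ⊆ Set.Ioi ξ := Set.Ioi_subset_Ioi (by linarith)
      have hIexp : IntegrableOn (fun u : ℝ => (1 + ξ) ^ (ω - 1) * Real.exp (-u))
          (Set.Ioi (ξ + 1)) := by
        have := (exp_neg_integrableOn_Ioi (ξ + 1) (one_pos)).const_mul ((1 + ξ) ^ (ω - 1))
        simpa [IntegrableOn] using this
      have step2 : (1 + ξ) ^ (ω - 1) * Real.exp (-(ξ + 1)) ≤
          ∫ u in Set.Ioi (ξ + 1), u ^ (ω - 1) * Real.exp (-u) := by
        have hval : ∫ u in Set.Ioi (ξ + 1), (1 + ξ) ^ (ω - 1) * Real.exp (-u)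
            = (1 + ξ) ^ (ω - 1) * Real.exp (-(ξ + 1)) := by
          rw [MeasureTheory.integral_const_mul, integral_exp_neg_Ioi]
        rw [← hval]
        refine setIntegral_mono_on hIexp (hint.mono_set hsub) measurableSet_Ioi ?_
        intro u hu
        simp only [mem_Ioi] at hu
        have : (1 + ξ) ^ (ω - 1) ≤ u ^ (ω - 1) :=
          Real.rpow_le_rpow h1ξ.le (by linarith) (by linarith)
        exact mul_le_mul_of_nonneg_right this (Real.exp_pos _).le
      have step1 : ∫ u in Set.Ioi (ξ + 1), u ^ (ω - 1) * Real.exp (-u) ≤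
          ∫ u in Set.Ioi ξ, u ^ (ω - 1) * Real.exp (-u) :=
        setIntegral_mono_set hint hf_nonneg (HasSubset.Subset.eventuallyLE hsub)
      have hfin : (1 - 2 ^ (-ω)) / (Real.exp 1 * ω) * (1 + ξ) ^ (ω - 1) * Real.exp (-ξ)
          ≤ (1 + ξ) ^ (ω - 1) * Real.exp (-(ξ + 1)) := by
        have hexp : Real.exp (-(ξ + 1)) = Real.exp (-ξ) * (1 / Real.exp 1) := by
          rw [show -(ξ + 1) = -ξ + -1 by ring, Real.exp_add, Real.exp_neg 1]
          ring
        rw [hexp]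
        calc (1 - 2 ^ (-ω)) / (Real.exp 1 * ω) * (1 + ξ) ^ (ω - 1) * Real.exp (-ξ)
            ≤ 1 / Real.exp 1 * (1 + ξ) ^ (ω - 1) * Real.exp (-ξ) := by
              apply mul_le_mul_of_nonneg_right _ hX.le
              exact mul_le_mul_of_nonneg_right hmle hP.le
          _ = (1 + ξ) ^ (ω - 1) * (Real.exp (-ξ) * (1 / Real.exp 1)) := by ring
      linarith
    · -- upper bound
      have hptw : ∀ u ∈ Set.Ioi ξ, u ^ (ω - 1) * Real.exp (-u) ≤
          (1 + ξ) ^ (ω - 1) * ((1 + u - ξ) * Real.exp (-u)) := by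
        intro u hu
        simp only [mem_Ioi] at hu
        have hu0 : 0 < u := by linarith
        have hb : (1 : ℝ) ≤ 1 + (u - ξ) := by linarith
        have h1 : u ≤ (1 + ξ) * (1 + (u - ξ)) := by nlinarith
        have h2 : u ^ (ω - 1) ≤ ((1 + ξ) * (1 + (u - ξ))) ^ (ω - 1) :=
          Real.rpow_le_rpow hu0.le h1 (by linarith)
        have h3 : ((1 + ξ) * (1 + (u - ξ))) ^ (ω - 1)
            = (1 + ξ) ^ (ω - 1) * (1 + (u - ξ)) ^ (ω - 1) :=
          Real.mul_rpow h1ξ.le (by linarith)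
        have h4 : (1 + (u - ξ)) ^ (ω - 1) ≤ 1 + (u - ξ) := by
          have := Real.rpow_le_rpow_of_exponent_le hb (by linarith : ω - 1 ≤ 1)
          rwa [Real.rpow_one] at this
        have h5 : u ^ (ω - 1) ≤ (1 + ξ) ^ (ω - 1) * (1 + (u - ξ)) := by
          calc u ^ (ω - 1) ≤ (1 + ξ) ^ (ω - 1) * (1 + (u - ξ)) ^ (ω - 1) := by
                rw [← h3]; exact h2
            _ ≤ (1 + ξ) ^ (ω - 1) * (1 + (u - ξ)) :=
                mul_le_mul_of_nonneg_left h4 hP.le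
        calc u ^ (ω - 1) * Real.exp (-u) ≤
            ((1 + ξ) ^ (ω - 1) * (1 + (u - ξ))) * Real.exp (-u) :=
              mul_le_mul_of_nonneg_right h5 (Real.exp_pos _).le
          _ = (1 + ξ) ^ (ω - 1) * ((1 + u - ξ) * Real.exp (-u)) := by ring
      have hcont : ContinuousWithinAt (fun u : ℝ => -((2 + u - ξ) * Real.exp (-u)))
          (Set.Ici ξ) ξ := by
        apply Continuous.continuousWithinAt; fun_prop
      have hF : ∀ x ∈ Set.Ioi ξ, HasDerivAt (fun u : ℝ => -((2 + u - ξ) * Real.exp (-u)))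
          ((1 + x - ξ) * Real.exp (-x)) x := by
        intro x _
        have h1 : HasDerivAt (fun u : ℝ => 2 + u - ξ) 1 x := by
          simpa using ((hasDerivAt_id x).const_add 2).sub_const ξ
        have h2 : HasDerivAt (fun u : ℝ => Real.exp (-u)) (-Real.exp (-x)) x := by
          simpa using (hasDerivAt_neg x).exp
        have := (h1.mul h2).neg
        exact this.congr_deriv (by ring)
      have htend : Tendsto (fun u : ℝ => -((2 + u - ξ) * Real.exp (-u))) atTop (𝓝 0) := by
        have h1 := tendsto_exp_neg_atTop_nhds_zero
        have h2 := Real.tendsto_pow_mul_exp_neg_atTop_nhds_zero 1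
        have h3 : Tendsto (fun u : ℝ => -((2 - ξ) * Real.exp (-u) + u ^ 1 * Real.exp (-u)))
            atTop (𝓝 (-((2 - ξ) * 0 + 0))) := ((h1.const_mul (2 - ξ)).add h2).neg
        have h4 : Tendsto (fun u : ℝ => -((2 + u - ξ) * Real.exp (-u))) atTop
            (𝓝 (-((2 - ξ) * 0 + 0))) := h3.congr (fun u => by ring)
        simpa using h4
      have hpos' : ∀ x ∈ Set.Ioi ξ, 0 ≤ (1 + x - ξ) * Real.exp (-x) := by
        intro x hx; simp only [mem_Ioi] at hx
        exact mul_nonneg (by linarith) (Real.exp_pos _).le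
      have hIg : IntegrableOn (fun u : ℝ => (1 + u - ξ) * Real.exp (-u)) (Set.Ioi ξ) :=
        integrableOn_Ioi_deriv_of_nonneg hcont hF hpos' htend
      have hIval : ∫ u in Set.Ioi ξ, (1 + u - ξ) * Real.exp (-u) = 2 * Real.exp (-ξ) := by
        rw [integral_Ioi_of_hasDerivAt_of_tendsto hcont hF hIg htend]
        ring_nf
      have step : ∫ u in Set.Ioi ξ, u ^ (ω - 1) * Real.exp (-u) ≤
          (1 + ξ) ^ (ω - 1) * (2 * Real.exp (-ξ)) := by
        have := setIntegral_mono_on hint (hIg.const_mul ((1 + ξ) ^ (ω - 1)))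
          measurableSet_Ioi hptw
        rwa [MeasureTheory.integral_const_mul, hIval] at this
      have hM : (2 : ℝ) ≤ 2 / ((1 - 1 / Real.exp 1) ^ 2 * ω) := by
        rw [le_div_iff₀ (by positivity)]
        nlinarith
      calc ∫ u in Set.Ioi ξ, u ^ (ω - 1) * Real.exp (-u)
          ≤ (1 + ξ) ^ (ω - 1) * (2 * Real.exp (-ξ)) := step
        _ ≤ 2 / ((1 - 1 / Real.exp 1) ^ 2 * ω) * (1 + ξ) ^ (ω - 1) * Real.exp (-ξ) := by
            nlinarith [mul_pos hP hX]
  · -- ω ≤ 1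
    have hs0 : ω - 1 ≤ 0 := by linarith
    have hIocInt : IntegrableOn (fun u : ℝ => u ^ (ω - 1) * Real.exp (-u))
        (Set.Ioc ξ (ξ + 1)) := hint.mono_set Set.Ioc_subset_Ioi_self
    constructor
    · -- lower bound
      have step1 : ∫ u in Set.Ioc ξ (ξ + 1), u ^ (ω - 1) * Real.exp (-u) ≤
          ∫ u in Set.Ioi ξ, u ^ (ω - 1) * Real.exp (-u) :=
        setIntegral_mono_set hint hf_nonneg
          (HasSubset.Subset.eventuallyLE Set.Ioc_subset_Ioi_self)
      have hIg : IntegrableOn (fun u : ℝ => (1 + ξ) ^ (ω - 1) * Real.exp (-u))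
          (Set.Ioc ξ (ξ + 1)) := by
        apply Continuous.integrableOn_Ioc; fun_prop
      have step2 : (1 + ξ) ^ (ω - 1) * (Real.exp (-ξ) - Real.exp (-(ξ + 1))) ≤
          ∫ u in Set.Ioc ξ (ξ + 1), u ^ (ω - 1) * Real.exp (-u) := by
        have hval : ∫ u in Set.Ioc ξ (ξ + 1), (1 + ξ) ^ (ω - 1) * Real.exp (-u)
            = (1 + ξ) ^ (ω - 1) * (Real.exp (-ξ) - Real.exp (-(ξ + 1))) := by
          rw [MeasureTheory.integral_const_mul, hIocExp]
        rw [← hval]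
        refine setIntegral_mono_on hIg hIocInt measurableSet_Ioc ?_
        intro u hu
        obtain ⟨hu1, hu2⟩ := hu
        have : (1 + ξ) ^ (ω - 1) ≤ u ^ (ω - 1) :=
          Real.rpow_le_rpow_of_nonpos (by linarith) (by linarith) hs0
        exact mul_le_mul_of_nonneg_right this (Real.exp_pos _).le
      have hfin : (1 - 2 ^ (-ω)) / (Real.exp 1 * ω) * (1 + ξ) ^ (ω - 1) * Real.exp (-ξ)
          ≤ (1 + ξ) ^ (ω - 1) * (Real.exp (-ξ) - Real.exp (-(ξ + 1))) := by
        have hexp : Real.exp (-(ξ + 1)) = Real.exp (-ξ) * (1 / Real.exp 1) := by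
          rw [show -(ξ + 1) = -ξ + -1 by ring, Real.exp_add, Real.exp_neg 1]
          ring
        have hm2 : (1 - 2 ^ (-ω)) / (Real.exp 1 * ω) ≤ 1 - 1 / Real.exp 1 := by
          linarith
        rw [hexp]
        have h1 : (1 - 2 ^ (-ω)) / (Real.exp 1 * ω) * (1 + ξ) ^ (ω - 1) * Real.exp (-ξ)
            ≤ (1 - 1 / Real.exp 1) * (1 + ξ) ^ (ω - 1) * Real.exp (-ξ) :=
          mul_le_mul_of_nonneg_right (mul_le_mul_of_nonneg_right hm2 hP.le) hX.le
        nlinarith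
      linarith
    · -- upper bound
      have hβ : 0 ≤ 1 - ω := by linarith
      have hβ1 : 1 - ω ≤ 1 := by linarith
      -- pointwise bound on Ioc
      have hptw : ∀ u ∈ Set.Ioc ξ (ξ + 1), u ^ (ω - 1) * Real.exp (-u) ≤
          (1 + ξ) ^ (ω - 1) * Real.exp (-ξ) * ((u - ξ) ^ (ω - 1) + 1) := by
        intro u hu
        obtain ⟨hu1, hu2⟩ := hu
        have hu0 : 0 < u := by linarith
        set t := u - ξ with ht
        have ht0 : 0 < t := by simp [ht]; linarith
        have hkey : (1 + ξ) * t / (1 + t) ≤ u := by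
          rw [div_le_iff₀ (by linarith)]
          have hsq : 0 ≤ t * t := mul_nonneg ht0.le ht0.le
          have hid : u * (1 + t) - (1 + ξ) * t = ξ + t * t := by rw [ht]; ring
          linarith
        have hbase : 0 < (1 + ξ) * t / (1 + t) := by positivity
        have h1 : u ^ (ω - 1) ≤ ((1 + ξ) * t / (1 + t)) ^ (ω - 1) :=
          Real.rpow_le_rpow_of_nonpos hbase hkey hs0
        have h2 : ((1 + ξ) * t / (1 + t)) ^ (ω - 1)
            = (1 + ξ) ^ (ω - 1) * (t / (1 + t)) ^ (ω - 1) := by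
          rw [mul_div_assoc, Real.mul_rpow h1ξ.le (by positivity)]
        have h3 : (t / (1 + t)) ^ (ω - 1) = ((1 + t) / t) ^ (1 - ω) := by
          rw [show (1 : ℝ) - ω = -(ω - 1) by ring, Real.rpow_neg (by positivity),
            ← Real.inv_rpow (by positivity), inv_div]
        have h4 : ((1 + t) / t) ^ (1 - ω) = (1 + 1 / t) ^ (1 - ω) := by
          congr 1
          field_simp
          ring
        have h5 : (1 + 1 / t) ^ (1 - ω) ≤ 1 + (1 / t) ^ (1 - ω) := by
          have h := aux_rpow_add_le (zero_le_one) (by positivity : (0:ℝ) ≤ 1 / t) hβ hβ1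
          rwa [Real.one_rpow] at h
        have h6 : (1 / t) ^ (1 - ω) = t ^ (ω - 1) := by
          rw [one_div, Real.inv_rpow ht0.le, ← Real.rpow_neg ht0.le]
          congr 1
          ring
        have h7 : u ^ (ω - 1) ≤ (1 + ξ) ^ (ω - 1) * ((u - ξ) ^ (ω - 1) + 1) := by
          calc u ^ (ω - 1) ≤ ((1 + ξ) * t / (1 + t)) ^ (ω - 1) := h1
            _ = (1 + ξ) ^ (ω - 1) * (t / (1 + t)) ^ (ω - 1) := h2
            _ = (1 + ξ) ^ (ω - 1) * (1 + 1 / t) ^ (1 - ω) := by rw [h3, h4]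
            _ ≤ (1 + ξ) ^ (ω - 1) * (1 + t ^ (ω - 1)) := by
                refine mul_le_mul_of_nonneg_left ?_ hP.le
                rw [← h6]; exact h5
            _ = (1 + ξ) ^ (ω - 1) * ((u - ξ) ^ (ω - 1) + 1) := by rw [← ht]; ring
        have h8 : Real.exp (-u) ≤ Real.exp (-ξ) := Real.exp_le_exp.mpr (by linarith)
        have h9 : 0 ≤ (1 + ξ) ^ (ω - 1) * ((u - ξ) ^ (ω - 1) + 1) := by
          have : 0 ≤ (u - ξ) ^ (ω - 1) := Real.rpow_nonneg (by linarith) _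
          positivity
        calc u ^ (ω - 1) * Real.exp (-u)
            ≤ ((1 + ξ) ^ (ω - 1) * ((u - ξ) ^ (ω - 1) + 1)) * Real.exp (-ξ) :=
              mul_le_mul h7 h8 (Real.exp_pos _).le h9
          _ = (1 + ξ) ^ (ω - 1) * Real.exp (-ξ) * ((u - ξ) ^ (ω - 1) + 1) := by ring
      -- integrability of the bounding function on Ioc
      have hII : IntervalIntegrable (fun u : ℝ => (u - ξ) ^ (ω - 1)) volume ξ (ξ + 1) := by
        have h := (intervalIntegral.intervalIntegrable_rpow'
          (show (-1:ℝ) < ω - 1 by linarith) (a := 0) (b := 1)).comp_sub_right ξ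
        simpa [add_comm] using h
      have hIg2 : IntegrableOn
          (fun u : ℝ => (1 + ξ) ^ (ω - 1) * Real.exp (-ξ) * ((u - ξ) ^ (ω - 1) + 1))
          (Set.Ioc ξ (ξ + 1)) := by
        have h := ((hII.add (intervalIntegrable_const (c := (1:ℝ)))).const_mul
          ((1 + ξ) ^ (ω - 1) * Real.exp (-ξ))).1
        simpa using h
      have hval2 : ∫ u in Set.Ioc ξ (ξ + 1),
          (1 + ξ) ^ (ω - 1) * Real.exp (-ξ) * ((u - ξ) ^ (ω - 1) + 1)
          = (1 + ξ) ^ (ω - 1) * Real.exp (-ξ) * (1 / ω + 1) := by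
        rw [MeasureTheory.integral_const_mul]
        congr 1
        rw [← intervalIntegral.integral_of_le (by linarith : ξ ≤ ξ + 1),
          intervalIntegral.integral_add hII intervalIntegrable_const,
          intervalIntegral.integral_const]
        have hcs : ∫ u in ξ..ξ + 1, (u - ξ) ^ (ω - 1) = ∫ x in (0:ℝ)..1, x ^ (ω - 1) := by
          rw [intervalIntegral.integral_comp_sub_right (fun x => x ^ (ω - 1)) ξ]
          norm_num
        rw [hcs, integral_rpow (Or.inl (by linarith : (-1:ℝ) < ω - 1))]
        rw [Real.one_rpow, Real.zero_rpow (by simpa using hω0.ne' : ω - 1 + 1 ≠ 0)]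
        simp
      have stepIoc : ∫ u in Set.Ioc ξ (ξ + 1), u ^ (ω - 1) * Real.exp (-u) ≤
          (1 + ξ) ^ (ω - 1) * Real.exp (-ξ) * (1 / ω + 1) := by
        rw [← hval2]
        exact setIntegral_mono_on hIocInt hIg2 measurableSet_Ioc hptw
      -- tail bound
      have hIexp : IntegrableOn (fun u : ℝ => (1 + ξ) ^ (ω - 1) * Real.exp (-u))
          (Set.Ioi (ξ + 1)) := by
        have := (exp_neg_integrableOn_Ioi (ξ + 1) (one_pos)).const_mul ((1 + ξ) ^ (ω - 1))
        simpa [IntegrableOn] using this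
      have hTailInt : IntegrableOn (fun u : ℝ => u ^ (ω - 1) * Real.exp (-u))
          (Set.Ioi (ξ + 1)) := hint.mono_set (Set.Ioi_subset_Ioi (by linarith))
      have stepTail : ∫ u in Set.Ioi (ξ + 1), u ^ (ω - 1) * Real.exp (-u) ≤
          (1 + ξ) ^ (ω - 1) * Real.exp (-(ξ + 1)) := by
        have hval : ∫ u in Set.Ioi (ξ + 1), (1 + ξ) ^ (ω - 1) * Real.exp (-u)
            = (1 + ξ) ^ (ω - 1) * Real.exp (-(ξ + 1)) := by
          rw [MeasureTheory.integral_const_mul, integral_exp_neg_Ioi]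
        rw [← hval]
        refine setIntegral_mono_on hTailInt hIexp measurableSet_Ioi ?_
        intro u hu
        simp only [mem_Ioi] at hu
        have : u ^ (ω - 1) ≤ (1 + ξ) ^ (ω - 1) :=
          Real.rpow_le_rpow_of_nonpos h1ξ (by linarith) hs0
        exact mul_le_mul_of_nonneg_right this (Real.exp_pos _).le
      -- split the integral
      have hsplit : ∫ u in Set.Ioi ξ, u ^ (ω - 1) * Real.exp (-u)
          = (∫ u in Set.Ioc ξ (ξ + 1), u ^ (ω - 1) * Real.exp (-u))
            + ∫ u in Set.Ioi (ξ + 1), u ^ (ω - 1) * Real.exp (-u) := by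
        rw [← MeasureTheory.setIntegral_union (Set.Ioc_disjoint_Ioi le_rfl)
          measurableSet_Ioi hIocInt hTailInt,
          Set.Ioc_union_Ioi_eq_Ioi (by linarith : ξ ≤ ξ + 1)]
      -- final constant comparison
      have hexp : Real.exp (-(ξ + 1)) = Real.exp (-ξ) * (1 / Real.exp 1) := by
        rw [show -(ξ + 1) = -ξ + -1 by ring, Real.exp_add, Real.exp_neg 1]
        ring
      have hM2 : 1 / ω + 1 + 1 / Real.exp 1 ≤ 2 / ((1 - 1 / Real.exp 1) ^ 2 * ω) := by
        rw [le_div_iff₀ (by positivity)]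
        have hωinv : ω * (1 / ω) = 1 := mul_one_div_cancel hω0.ne'
        have expand : (1 / ω + 1 + 1 / Real.exp 1) * ((1 - 1 / Real.exp 1) ^ 2 * ω)
            = (1 - 1 / Real.exp 1) ^ 2 * (ω * (1 / ω) + ω + ω * (1 / Real.exp 1)) := by
          ring
        rw [expand, hωinv]
        have h6 : ω * (1 / Real.exp 1) ≤ 1 / 2 := by nlinarith [one_div_pos.mpr hepos]
        nlinarith [sq_nonneg (1 - 1 / Real.exp 1), one_div_pos.mpr hepos]
      calc ∫ u in Set.Ioi ξ, u ^ (ω - 1) * Real.exp (-u)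
          ≤ (1 + ξ) ^ (ω - 1) * Real.exp (-ξ) * (1 / ω + 1)
            + (1 + ξ) ^ (ω - 1) * Real.exp (-(ξ + 1)) := by
            rw [hsplit]; exact add_le_add stepIoc stepTail
        _ = (1 + ξ) ^ (ω - 1) * Real.exp (-ξ) * (1 / ω + 1 + 1 / Real.exp 1) := by
            rw [hexp]; ring
        _ ≤ (1 + ξ) ^ (ω - 1) * Real.exp (-ξ) * (2 / ((1 - 1 / Real.exp 1) ^ 2 * ω)) :=
            mul_le_mul_of_nonneg_left hM2 (by positivity)
        _ = 2 / ((1 - 1 / Real.exp 1) ^ 2 * ω) * (1 + ξ) ^ (ω - 1) * Real.exp (-ξ) := by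
            ring
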